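/- For any element α = (p,q) ∈ Q̂ with |p| + |q| ≥ 2 (i.e., α ∉ {0, ∞, ±1}), there exist β, γ ∈ Q̂ with β ⊥ γ, α = βγ (the product), and such that the 'heights' |p'| + |q'| of both β and γ are strictly smaller than |p| + |q|. -/
import Mathlib


/-- The determinant of two integer vectors. -/
def det (v w : ℤ × ℤ) : ℤ := v.1 * w.2 - w.1 * v.2

/-- The unimodular (Farey) relation: determinant `±1`. -/
def FareyPair (v w : ℤ × ℤ) : Prop := det v w = 1 ∨ det v w = -1

/-- Coprime integer pairs. -/
abbrev CP : Type := {v : ℤ × ℤ // IsCoprime v.1 v.2}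

instance cpSetoid : Setoid CP where
  r v w := v.1 = w.1 ∨ v.1 = -w.1
  iseqv := by
    refine ⟨fun _ => Or.inl rfl, ?_, ?_⟩
    · rintro v w (h | h)
      · exact Or.inl h.symm
      · exact Or.inr (by rw [h, neg_neg])
    · rintro u v w (h1 | h1) (h2 | h2)
      · exact Or.inl (h1.trans h2)
      · exact Or.inr (h1.trans h2)
      · exact Or.inr (by rw [h1, h2])
      · exact Or.inl (by rw [h1, h2, neg_neg])

/-- `Q̂ = Q ∪ {∞}`: coprime integer pairs up to sign. -/
def Qhat : Type := Quotient cpSetoid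

def Qhat.mk (v : ℤ × ℤ) (h : IsCoprime v.1 v.2) : Qhat := ⟦⟨v, h⟩⟧

lemma det_neg_left (v w : ℤ × ℤ) : det (-v) w = -(det v w) := by
  simp only [det, Prod.fst_neg, Prod.snd_neg]; ring

lemma det_neg_right (v w : ℤ × ℤ) : det v (-w) = -(det v w) := by
  simp only [det, Prod.fst_neg, Prod.snd_neg]; ring

lemma fareyPair_neg_left (v w : ℤ × ℤ) : FareyPair (-v) w ↔ FareyPair v w := by
  unfold FareyPair; rw [det_neg_left]; omega

lemma fareyPair_neg_right (v w : ℤ × ℤ) : FareyPair v (-w) ↔ FareyPair v w := by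
  unfold FareyPair; rw [det_neg_right]; omega

lemma farey_well {a b a' b' : CP} (ha : a ≈ a') (hb : b ≈ b') :
    FareyPair a.1 b.1 ↔ FareyPair a'.1 b'.1 := by
  rcases ha with h | h <;> rcases hb with h' | h' <;> rw [h, h'] <;>
    simp [fareyPair_neg_left, fareyPair_neg_right]

/-- The Farey relation on `Q̂`. -/
def Frel : Qhat → Qhat → Prop :=
  Quotient.lift₂ (fun v w : CP => FareyPair v.1 w.1)
    (fun _ _ _ _ ha hb => propext (farey_well ha hb))

/-- The product (signed mediant): for `λ = det v w`, `(p + λ p', q + λ q')`. -/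
def fmul (v w : ℤ × ℤ) : ℤ × ℤ := (v.1 + det v w * w.1, v.2 + det v w * w.2)

lemma isCoprime_of_det {v w : ℤ × ℤ} (h : det v w = 1 ∨ det v w = -1) :
    IsCoprime v.1 v.2 := by
  rcases h with h | h
  · exact ⟨w.2, -w.1, by simp only [det] at h; linarith [h]⟩
  · exact ⟨-w.2, w.1, by simp only [det] at h; linarith [h]⟩

lemma isCoprime_fmul {v w : ℤ × ℤ} (h : FareyPair v w) :
    IsCoprime (fmul v w).1 (fmul v w).2 := by
  have h2 : det v w * det v w = 1 := by rcases h with h | h <;> rw [h] <;> ring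
  refine ⟨det v w * w.2, -(det v w * w.1), ?_⟩
  simp only [fmul, det] at h2 ⊢
  linear_combination h2

/-- The product on `Q̂`, defined for Farey-related representatives. -/
def qprod (v w : CP) (h : FareyPair v.1 w.1) : Qhat :=
  Qhat.mk (fmul v.1 w.1) (isCoprime_fmul h)

/-- Height `|p| + |q|` on `Q̂`. -/
def qheight : Qhat → ℕ :=
  Quotient.lift (fun v : CP => v.1.1.natAbs + v.1.2.natAbs)
    (by rintro v w (h | h) <;>
      simp only [h, Prod.fst_neg, Prod.snd_neg, Int.natAbs_neg])

/-- Action of an integer matrix on `ℤ × ℤ`. -/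
def matAct (A : Matrix (Fin 2) (Fin 2) ℤ) (v : ℤ × ℤ) : ℤ × ℤ :=
  (A 0 0 * v.1 + A 0 1 * v.2, A 1 0 * v.1 + A 1 1 * v.2)

lemma det_matAct (A : Matrix (Fin 2) (Fin 2) ℤ) (v w : ℤ × ℤ) :
    det (matAct A v) (matAct A w) = A.det * det v w := by
  simp only [matAct, det, Matrix.det_fin_two]; ring

lemma isCoprime_matAct (A : GL (Fin 2) ℤ) (v : ℤ × ℤ) (h : IsCoprime v.1 v.2) :
    IsCoprime (matAct (A : Matrix (Fin 2) (Fin 2) ℤ) v).1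
      (matAct (A : Matrix (Fin 2) (Fin 2) ℤ) v).2 := by
  obtain ⟨x, y, hxy⟩ := h
  have hdv : det v (-y, x) = 1 := by simp only [det]; linarith [hxy]
  have hdA : (A : Matrix (Fin 2) (Fin 2) ℤ).det = 1 ∨
      (A : Matrix (Fin 2) (Fin 2) ℤ).det = -1 := by
    have : IsUnit (A : Matrix (Fin 2) (Fin 2) ℤ).det :=
      (Matrix.isUnit_iff_isUnit_det _).mp A.isUnit
    rwa [Int.isUnit_iff] at this
  apply isCoprime_of_det (w := matAct (A : Matrix (Fin 2) (Fin 2) ℤ) (-y, x))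
  rw [det_matAct, hdv, mul_one]
  exact hdA

lemma matAct_neg (A : Matrix (Fin 2) (Fin 2) ℤ) (v : ℤ × ℤ) :
    matAct A (-v) = -(matAct A v) := by
  simp only [matAct, Prod.fst_neg, Prod.snd_neg, Prod.neg_mk, Prod.mk.injEq]
  constructor <;> ring

/-- The action of `GL(2,ℤ)` on `Q̂`. -/
def qAct (A : GL (Fin 2) ℤ) : Qhat → Qhat :=
  Quotient.lift
    (fun v : CP => (⟦⟨matAct (A : Matrix (Fin 2) (Fin 2) ℤ) v.1,
      isCoprime_matAct A v.1 v.2⟩⟧ : Qhat))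
    (by
      rintro v w (h | h)
      · exact Quotient.sound
          (Or.inl (congrArg (matAct (A : Matrix (Fin 2) (Fin 2) ℤ)) h))
      · refine Quotient.sound (Or.inr ?_)
        show matAct (A : Matrix (Fin 2) (Fin 2) ℤ) v.1 =
          -(matAct (A : Matrix (Fin 2) (Fin 2) ℤ) w.1)
        rw [h, matAct_neg])

lemma isCoprime_one_zero : IsCoprime (1 : ℤ) (0 : ℤ) := isCoprime_one_left
lemma isCoprime_zero_one : IsCoprime (0 : ℤ) (1 : ℤ) := isCoprime_one_right
lemma isCoprime_one_one : IsCoprime (1 : ℤ) (1 : ℤ) := isCoprime_one_left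

/-- The point `∞ = (1,0)`. -/
def qinf : Qhat := Qhat.mk (1, 0) isCoprime_one_zero
/-- The point `0 = (0,1)`. -/
def qzero : Qhat := Qhat.mk (0, 1) isCoprime_zero_one
/-- The point `1 = (1,1)`. -/
def qone : Qhat := Qhat.mk (1, 1) isCoprime_one_one

lemma exists_ab (p q : ℤ) (hp : 1 ≤ p) (hq : 1 ≤ q) (h : IsCoprime p q) :
    ∃ a b : ℤ, a * q - p * b = 1 ∧ 1 ≤ a ∧ a ≤ p ∧ 0 ≤ b ∧ b < q := by
  obtain ⟨x, y, hxy⟩ := h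
  set a := (y - 1) % p + 1 with ha
  have h1 : 1 ≤ a := by
    have := Int.emod_nonneg (y - 1) (by omega : p ≠ 0); omega
  have h2 : a ≤ p := by
    have := Int.emod_lt_of_pos (y - 1) (by omega : 0 < p); omega
  have hk : a - y = p * (-((y - 1) / p)) := by
    rw [ha, Int.emod_def]; ring
  set k := -((y - 1) / p) with hk'
  have hab : a * q - p * (-x + k * q) = 1 := by linear_combination hxy + q * hk
  refine ⟨a, -x + k * q, hab, h1, h2, ?_, ?_⟩
  · nlinarith
  · nlinarith

lemma core_pos (p q : ℤ) (hp : 1 ≤ p) (hcop : IsCoprime p q)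
    (h2 : 2 ≤ p.natAbs + q.natAbs) :
    ∃ β γ : ℤ × ℤ, FareyPair β γ ∧ fmul β γ = (p, q) ∧
      β.1.natAbs + β.2.natAbs < p.natAbs + q.natAbs ∧
      γ.1.natAbs + γ.2.natAbs < p.natAbs + q.natAbs := by
  rcases lt_trichotomy q 0 with hq | hq | hq
  · obtain ⟨a, b, hab, ha1, hap, hb0, hbq⟩ :=
      exists_ab p (-q) hp (by omega) hcop.neg_right
    have hd : det (p - a, q + b) (a, -b) = 1 := by
      simp only [det]; linear_combination hab
    refine ⟨(p - a, q + b), (a, -b), Or.inl hd, ?_, ?_, ?_⟩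
    · simp only [fmul, hd]; refine Prod.ext ?_ ?_ <;> dsimp <;> ring
    · simp only; omega
    · simp only; omega
  · exfalso
    rw [hq, isCoprime_zero_right, Int.isUnit_iff] at hcop
    rcases hcop with h | h <;> simp [h, hq] at h2
  · obtain ⟨a, b, hab, ha1, hap, hb0, hbq⟩ := exists_ab p q hp hq hcop
    have hd : det (a, b) (p - a, q - b) = 1 := by
      simp only [det]; linear_combination hab
    refine ⟨(a, b), (p - a, q - b), Or.inl hd, ?_, ?_, ?_⟩
    · simp only [fmul, hd]; refine Prod.ext ?_ ?_ <;> dsimp <;> ring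
    · simp only; omega
    · simp only; omega

lemma core (p q : ℤ) (hcop : IsCoprime p q) (h2 : 2 ≤ p.natAbs + q.natAbs) :
    ∃ β γ : ℤ × ℤ, FareyPair β γ ∧
      (fmul β γ = (p, q) ∨ fmul β γ = (-p, -q)) ∧
      β.1.natAbs + β.2.natAbs < p.natAbs + q.natAbs ∧
      γ.1.natAbs + γ.2.natAbs < p.natAbs + q.natAbs := by
  rcases lt_trichotomy p 0 with hp | hp | hp
  · obtain ⟨β, γ, hF, hm, hb, hg⟩ :=
      core_pos (-p) (-q) (by omega) (hcop.neg_left.neg_right)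
        (by simpa [Int.natAbs_neg] using h2)
    exact ⟨β, γ, hF, Or.inr (by simpa using hm), by omega, by omega⟩
  · exfalso
    rw [hp, isCoprime_zero_left, Int.isUnit_iff] at hcop
    rcases hcop with h | h <;> simp [h, hp] at h2
  · obtain ⟨β, γ, hF, hm, hb, hg⟩ := core_pos p q (by omega) hcop h2
    exact ⟨β, γ, hF, Or.inl hm, hb, hg⟩

theorem stmt_9 (v : ℤ × ℤ) (hv : IsCoprime v.1 v.2)
    (h : 2 ≤ v.1.natAbs + v.2.natAbs) :
    ∃ β γ : ℤ × ℤ, IsCoprime β.1 β.2 ∧ IsCoprime γ.1 γ.2 ∧ FareyPair β γ ∧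
      (fmul β γ = v ∨ fmul β γ = -v) ∧
      β.1.natAbs + β.2.natAbs < v.1.natAbs + v.2.natAbs ∧
      γ.1.natAbs + γ.2.natAbs < v.1.natAbs + v.2.natAbs := by
  obtain ⟨β, γ, hF, hm, hb, hg⟩ := core v.1 v.2 hv h
  have hβ : IsCoprime β.1 β.2 := isCoprime_of_det hF
  have hγ : IsCoprime γ.1 γ.2 := by
    apply isCoprime_of_det (w := β)
    have : det γ β = -(det β γ) := by simp only [det]; ring
    rcases hF with h' | h' <;> rw [this, h'] <;> simp
  refine ⟨β, γ, hβ, hγ, hF, ?_, hb, hg⟩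
  rcases hm with h' | h'
  · exact Or.inl (by rw [h'])
  · exact Or.inr (by rw [h']; ext <;> simp)
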